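/- Let U be a real Hilbert space, W ⊆ U a closed subspace with orthogonal projection P_W, and M ⊆ U a nonempty subset. Let δ₀ ≥ 0 and μ ≥ 0 be constants such that for every σ ≥ 0, every w ∈ W, and all x, y with P_W x = P_W y = w, infDist(x, M) ≤ σ and infDist(y, M) ≤ σ, one has ‖x − y‖ ≤ δ₀ + 2σμ. Let S : U → ℝ satisfy c·infDist(v, M) ≤ S(v) ≤ C·infDist(v, M) for all v ∈ U, with 0 < c ≤ C. Let I be a nonempty index set and, for each i ∈ I, let A_i : W → U satisfy P_W(A_i(w)) = w for all w ∈ W. Fix u ∈ M and set w := P_W u, and suppose i* ∈ I attains the minimum of i ↦ S(A_i(w)) over I, i.e. S(A_{i*}(w)) ≤ S(A_i(w)) for all i ∈ I. Then ‖u − A_{i*}(w)‖ ≤ δ₀ + 2(C/c)·μ · inf_{i ∈ I} ‖u − A_i(w)‖. -/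

import Mathlib

/-- Oracle bound for the dictionary-based multi-space recovery (Corollary 5.1). -/
theorem stmt_7
    {U : Type*} [NormedAddCommGroup U] [InnerProductSpace ℝ U] [CompleteSpace U]
    (W : Submodule ℝ U) [CompleteSpace W]
    (M : Set U) (hM : M.Nonempty)
    (δ₀ μ : ℝ) (hδ₀ : 0 ≤ δ₀) (hμ : 0 ≤ μ)
    (hstab : ∀ σ : ℝ, 0 ≤ σ → ∀ w : W, ∀ x y : U,
      Submodule.orthogonalProjectionOnto W x = w → Submodule.orthogonalProjectionOnto W y = w →
      Metric.infDist x M ≤ σ → Metric.infDist y M ≤ σ →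
      ‖x - y‖ ≤ δ₀ + 2 * σ * μ)
    (S : U → ℝ) (c C : ℝ) (hc : 0 < c) (hcC : c ≤ C)
    (hS : ∀ v : U, c * Metric.infDist v M ≤ S v ∧ S v ≤ C * Metric.infDist v M)
    (I : Type*) [Nonempty I]
    (A : I → W → U)
    (hA : ∀ (i : I) (w : W), Submodule.orthogonalProjectionOnto W (A i w) = w)
    (u : U) (hu : u ∈ M)
    (istar : I)
    (histar : ∀ i : I,
      S (A istar (Submodule.orthogonalProjectionOnto W u)) ≤ S (A i (Submodule.orthogonalProjectionOnto W u))) :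
    ‖u - A istar (Submodule.orthogonalProjectionOnto W u)‖ ≤
      δ₀ + 2 * (C / c) * μ * ⨅ i : I, ‖u - A i (Submodule.orthogonalProjectionOnto W u)‖ := by
  set w := Submodule.orthogonalProjectionOnto W u with hw
  set d : ℝ := ⨅ i : I, ‖u - A i w‖ with hd
  have hC : 0 < C := lt_of_lt_of_le hc hcC
  have hbdd : BddBelow (Set.range fun i : I => ‖u - A i w‖) :=
    ⟨0, by rintro _ ⟨i, rfl⟩; positivity⟩
  have hd0 : 0 ≤ d := le_ciInf fun i => by positivity
  -- infDist of the selected reconstruction is ≤ (C/c) * d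
  have hkey : Metric.infDist (A istar w) M ≤ (C / c) * d := by
    have h1 : (c / C) * Metric.infDist (A istar w) M ≤ d := by
      refine le_ciInf fun i => ?_
      have h2 : c * Metric.infDist (A istar w) M ≤ C * ‖u - A i w‖ := by
        have := (hS (A istar w)).1
        have h3 := (hS (A i w)).2
        have h4 : Metric.infDist (A i w) M ≤ ‖u - A i w‖ := by
          calc Metric.infDist (A i w) M ≤ dist (A i w) u := Metric.infDist_le_dist_of_mem hu
            _ = ‖u - A i w‖ := by rw [dist_eq_norm, ← neg_sub, norm_neg]
        calc c * Metric.infDist (A istar w) M ≤ S (A istar w) := this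
          _ ≤ S (A i w) := histar i
          _ ≤ C * Metric.infDist (A i w) M := h3
          _ ≤ C * ‖u - A i w‖ := by nlinarith
      rw [div_mul_eq_mul_div, div_le_iff₀ hC]
      nlinarith
    rw [div_mul_eq_mul_div, div_le_iff₀ hC] at h1
    rw [div_mul_eq_mul_div, le_div_iff₀ hc]
    nlinarith
  have hσ : (0:ℝ) ≤ (C / c) * d := by positivity
  have hu0 : Metric.infDist u M ≤ (C / c) * d := by
    rw [Metric.infDist_zero_of_mem hu]; exact hσ
  have := hstab ((C / c) * d) hσ w u (A istar w) hw.symm (hA istar w) hu0 hkey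
  calc ‖u - A istar w‖ ≤ δ₀ + 2 * ((C / c) * d) * μ := this
    _ = δ₀ + 2 * (C / c) * μ * d := by ring
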